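/- Let (Ω, 𝒜, P) be a probability space, X, Y₀, Y₁ : Ω → {0,1} measurable, and Y = Y_X the observed outcome (Y(ω) = Y₁(ω) if X(ω)=1, else Y₀(ω)). With μ₁ = P(Y₁=1), μ₀ = P(Y₀=1), p₁₀ = P(X=1, Y=0), p₀₁ = P(X=0, Y=1), and PNS = P(Y₁ = 1, Y₀ = 0), one has PNS ≤ μ₁ − μ₀ + p₁₀ + p₀₁. -/

import Mathlib

open MeasureTheory

/-- Fourth term of the Tian–Pearl upper bound: PNS ≤ μ₁ − μ₀ + p₁₀ + p₀₁. -/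
theorem pns_le_ate_add_discordant {Ω : Type*} [MeasurableSpace Ω] (P : Measure Ω)
    [IsProbabilityMeasure P] (X Y₀ Y₁ Y : Ω → Bool)
    (hX : Measurable X) (hY₀ : Measurable Y₀) (hY₁ : Measurable Y₁)
    (hY : ∀ ω, Y ω = if X ω = true then Y₁ ω else Y₀ ω) :
    let μ₁ := (P {ω | Y₁ ω = true}).toReal
    let μ₀ := (P {ω | Y₀ ω = true}).toReal
    let p₁₀ := (P {ω | X ω = true ∧ Y ω = false}).toReal
    let p₀₁ := (P {ω | X ω = false ∧ Y ω = true}).toReal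
    let PNS := (P {ω | Y₁ ω = true ∧ Y₀ ω = false}).toReal
    PNS ≤ μ₁ - μ₀ + p₁₀ + p₀₁ := by
  intro μ₁ μ₀ p₁₀ p₀₁ PNS
  set A : Set Ω := {ω | Y₁ ω = true} with hA
  set B : Set Ω := {ω | Y₀ ω = true} with hB
  have hmA : MeasurableSet A := hY₁ (measurableSet_singleton true)
  have hmB : MeasurableSet B := hY₀ (measurableSet_singleton true)
  have hPNSset : {ω | Y₁ ω = true ∧ Y₀ ω = false} = A \ B := by
    ext ω; simp [hA, hB, Set.mem_diff]
  have hBA : B \ A = {ω | Y₀ ω = true ∧ Y₁ ω = false} := by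
    ext ω; simp [hA, hB, Set.mem_diff]
  -- inclusion: B \ A ⊆ p₁₀-set ∪ p₀₁-set
  have hsub : B \ A ⊆ {ω | X ω = true ∧ Y ω = false} ∪ {ω | X ω = false ∧ Y ω = true} := by
    rw [hBA]
    intro ω hω
    obtain ⟨h0, h1⟩ := hω
    by_cases hx : X ω = true
    · left; exact ⟨hx, by rw [hY ω, if_pos hx]; exact h1⟩
    · right
      refine ⟨by simpa using hx, ?_⟩
      rw [hY ω, if_neg hx]; exact h0
  have hBAle : P (B \ A) ≤ P {ω | X ω = true ∧ Y ω = false} + P {ω | X ω = false ∧ Y ω = true} :=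
    le_trans (measure_mono hsub) (measure_union_le _ _)
  have hAsplit : P (A ∩ B) + P (A \ B) = P A := measure_inter_add_diff A hmB
  have hBsplit : P (B ∩ A) + P (B \ A) = P B := measure_inter_add_diff B hmA
  have key : P (A \ B) + P B ≤ P A + (P {ω | X ω = true ∧ Y ω = false}
      + P {ω | X ω = false ∧ Y ω = true}) := by
    calc P (A \ B) + P B = P (A \ B) + (P (B ∩ A) + P (B \ A)) := by rw [hBsplit]
    _ = (P (A ∩ B) + P (A \ B)) + P (B \ A) := by rw [Set.inter_comm B A]; ring
    _ = P A + P (B \ A) := by rw [hAsplit]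
    _ ≤ _ := add_le_add le_rfl hBAle
  have hfin : ∀ s : Set Ω, P s ≠ ⊤ := fun s => measure_ne_top P s
  have key' := ENNReal.toReal_mono (by finiteness) key
  rw [ENNReal.toReal_add (hfin _) (hfin _),
      ENNReal.toReal_add (hfin _) (ENNReal.add_ne_top.2 ⟨hfin _, hfin _⟩),
      ENNReal.toReal_add (hfin _) (hfin _)] at key'
  simp only [μ₁, μ₀, p₁₀, p₀₁, PNS, hPNSset]
  linarith
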